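/- With B = !![β, γ/λ; −λγ, β] for λ > 0 and β² + γ² < 1, the powers Bⁿ converge to the zero matrix, and moreover each entry of Bⁿ is bounded: |(Bⁿ)₁₁|, |(Bⁿ)₂₂| ≤ rⁿ, |(Bⁿ)₁₂| ≤ rⁿ/λ, |(Bⁿ)₂₁| ≤ λrⁿ, where r = √(β² + γ²). -/

import Mathlib

open Matrix Filter

/-- with B = !![β, γ/λ; −λγ, β], λ > 0 and r = √(β² + γ²) < 1,
Bⁿ → 0 and the entries of Bⁿ satisfy the stated bounds. -/
theorem B_pow_tendsto_zero (β γ lam r : ℝ) (hlam : 0 < lam)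
    (hr : r = Real.sqrt (β ^ 2 + γ ^ 2)) (hr1 : r < 1)
    (B : Matrix (Fin 2) (Fin 2) ℝ) (hB : B = !![β, γ / lam; -(lam * γ), β]) :
    Filter.Tendsto (fun n : ℕ => B ^ n) Filter.atTop (nhds 0) ∧
    (∀ n : ℕ,
      |(B ^ n) 0 0| ≤ r ^ n ∧ |(B ^ n) 1 1| ≤ r ^ n ∧
      |(B ^ n) 0 1| ≤ r ^ n / lam ∧ |(B ^ n) 1 0| ≤ lam * r ^ n) := by
  have hr0 : 0 ≤ r := hr ▸ Real.sqrt_nonneg _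
  have hr2 : r ^ 2 = β ^ 2 + γ ^ 2 := by
    rw [hr]; exact Real.sq_sqrt (by positivity)
  have key : ∀ n : ℕ, ∃ a b : ℝ,
      B ^ n = !![a, b / lam; -(lam * b), a] ∧ a ^ 2 + b ^ 2 = (β ^ 2 + γ ^ 2) ^ n := by
    intro n
    induction n with
    | zero =>
      refine ⟨1, 0, ?_, by ring⟩
      simp only [pow_zero]
      ext i j
      fin_cases i <;> fin_cases j <;> simp [Matrix.one_apply]
    | succ n ih =>
      obtain ⟨a, b, hab, habs⟩ := ih
      refine ⟨a * β - b * γ, a * γ + b * β, ?_, by rw [pow_succ (β ^ 2 + γ ^ 2) n, ← habs]; ring⟩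
      rw [pow_succ, hab, hB]
      ext i j
      fin_cases i <;> fin_cases j <;>
        simp [Matrix.mul_apply, Fin.sum_univ_two] <;> (try field_simp) <;> ring
  have bounds : ∀ n : ℕ,
      |(B ^ n) 0 0| ≤ r ^ n ∧ |(B ^ n) 1 1| ≤ r ^ n ∧
      |(B ^ n) 0 1| ≤ r ^ n / lam ∧ |(B ^ n) 1 0| ≤ lam * r ^ n := by
    intro n
    obtain ⟨a, b, hab, habs⟩ := key n
    have hrn : (r ^ n) ^ 2 = (β ^ 2 + γ ^ 2) ^ n := by
      rw [← pow_mul, mul_comm, pow_mul, hr2]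
    have ha : |a| ≤ r ^ n := by
      have h : a ^ 2 ≤ (r ^ n) ^ 2 := by rw [hrn]; nlinarith [sq_nonneg b]
      exact abs_le.mpr (abs_le_of_sq_le_sq' h (by positivity))
    have hb : |b| ≤ r ^ n := by
      have h : b ^ 2 ≤ (r ^ n) ^ 2 := by rw [hrn]; nlinarith [sq_nonneg a]
      exact abs_le.mpr (abs_le_of_sq_le_sq' h (by positivity))
    rw [hab]
    refine ⟨by simpa using ha, by simpa using ha, ?_, ?_⟩
    · have h01 : (!![a, b / lam; -(lam * b), a]) 0 1 = b / lam := by simp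
      rw [h01, abs_div, abs_of_pos hlam]
      gcongr
    · have h10 : (!![a, b / lam; -(lam * b), a]) 1 0 = -(lam * b) := by simp
      rw [h10, abs_neg, abs_mul, abs_of_pos hlam]
      gcongr
  refine ⟨?_, bounds⟩
  have hrt : Tendsto (fun n : ℕ => r ^ n) atTop (nhds 0) :=
    tendsto_pow_atTop_nhds_zero_of_lt_one hr0 hr1
  refine tendsto_pi_nhds.mpr ?_
  intro i
  rw [tendsto_pi_nhds]
  intro j
  fin_cases i <;> fin_cases j
  · exact squeeze_zero_norm (fun n => (bounds n).1) hrt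
  · exact squeeze_zero_norm (fun n => (bounds n).2.2.1)
      (by simpa using hrt.div_const lam)
  · exact squeeze_zero_norm (fun n => (bounds n).2.2.2)
      (by simpa using hrt.const_mul lam)
  · exact squeeze_zero_norm (fun n => (bounds n).2.1) hrt
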